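/- Let q ≥ 2 and d ≥ 1 be integers and let v ∈ ℝ^d be nonzero. If x is drawn uniformly at random from {0, 1, …, q−1}^d, then Pr[∑_{i=1}^d x_i v_i = 0] ≤ 1/q. -/

import Mathlib

open scoped Classical

theorem stmt_4 (q d : ℕ) (hq : 2 ≤ q) (hd : 1 ≤ d) (v : Fin d → ℝ) (hv : v ≠ 0) :
    ((Finset.univ.filter
        (fun x : Fin d → Fin q => ∑ i, ((x i : ℕ) : ℝ) * v i = 0)).card : ℝ) / (q : ℝ) ^ d
      ≤ 1 / (q : ℝ) := by
  obtain ⟨i, hi⟩ : ∃ i, v i ≠ 0 := by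
    by_contra h; push_neg at h; exact hv (funext h)
  have hq0 : (0:ℝ) < q := by
    have : 0 < q := by omega
    exact_mod_cast this
  set S := Finset.univ.filter
      (fun x : Fin d → Fin q => ∑ i, ((x i : ℕ) : ℝ) * v i = 0) with hS
  have hcard : S.card ≤ q ^ (d-1) := by
    have hle : S.card ≤ Fintype.card ({j : Fin d // j ≠ i} → Fin q) := by
      rw [← Finset.card_univ]
      apply Finset.card_le_card_of_injOn (fun x (j : {j : Fin d // j ≠ i}) => x j)
        (fun _ _ => Finset.mem_univ _)
      intro x hx y hy hxy
      simp only [hS, Finset.mem_coe, Finset.mem_filter] at hx hy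
      have hne : ∀ j, j ≠ i → x j = y j := fun j hj => congrFun hxy ⟨j, hj⟩
      funext j
      by_cases hji : j = i
      · subst hji
        have hsum : ∑ k, ((x k : ℕ) : ℝ) * v k = ∑ k, ((y k : ℕ) : ℝ) * v k :=
          hx.2.trans hy.2.symm
        rw [← Finset.add_sum_erase Finset.univ _ (Finset.mem_univ j),
            ← Finset.add_sum_erase Finset.univ (fun k => ((y k : ℕ) : ℝ) * v k)
              (Finset.mem_univ j)] at hsum
        have heq : ∑ k ∈ Finset.univ.erase j, ((x k : ℕ) : ℝ) * v k
            = ∑ k ∈ Finset.univ.erase j, ((y k : ℕ) : ℝ) * v k := by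
          apply Finset.sum_congr rfl
          intro k hk
          rw [hne k (Finset.ne_of_mem_erase hk)]
        have : ((x j : ℕ) : ℝ) * v j = ((y j : ℕ) : ℝ) * v j := by linarith
        have hxy' : ((x j : ℕ) : ℝ) = ((y j : ℕ) : ℝ) := by
          exact mul_right_cancel₀ hi this
        have : (x j : ℕ) = (y j : ℕ) := by exact_mod_cast hxy'
        exact Fin.ext this
      · exact hne j hji
    have hcc : Fintype.card ({j : Fin d // j ≠ i} → Fin q) = q ^ (d - 1) := by
      rw [Fintype.card_fun, Fintype.card_fin]
      congr 1
      simp [Fintype.card_subtype_compl]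
    omega
  have h1 : ((S.card : ℝ)) ≤ (q : ℝ) ^ (d - 1) := by exact_mod_cast hcard
  have h2 : (q:ℝ) ^ d = (q:ℝ) ^ (d-1) * q := by
    rw [← pow_succ]
    congr 1
    omega
  rw [h2, div_le_div_iff₀ (by positivity) hq0]
  calc (S.card : ℝ) * q ≤ (q:ℝ)^(d-1) * q := by
        apply mul_le_mul_of_nonneg_right h1 hq0.le
    _ = 1 * ((q:ℝ)^(d-1) * q) := by ring
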